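/- The set of nonzero complex numbers z satisfying z^{π+1} = −2 (principal power) is exactly { 2^{1/(π+1)} · exp(iπ(2k+1)/(π+1)) : k ∈ {−2, −1, 0, 1} }, and it has exactly 4 elements. -/
import Mathlib


open Complex Real

noncomputable def zkAux (k : ℤ) : ℂ :=
  (((2 : ℝ) ^ (1 / (Real.pi + 1)) : ℝ) : ℂ) *
    Complex.exp (Complex.I * Real.pi * (2 * k + 1) / ((Real.pi : ℂ) + 1))

noncomputable def ckAux (k : ℤ) : ℂ :=
  ((Real.log 2 / (Real.pi + 1) : ℝ) : ℂ) +
    ((Real.pi * (2 * k + 1) / (Real.pi + 1) : ℝ) : ℂ) * Complex.I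

lemma ppos_aux : (0 : ℝ) < Real.pi + 1 := by positivity

lemma pne_aux : ((Real.pi : ℂ) + 1) ≠ 0 := by
  intro h
  have : (Real.pi : ℝ) + 1 = 0 := by exact_mod_cast congrArg Complex.re h
  linarith [Real.pi_pos]

lemma ck_im_aux (k : ℤ) : (ckAux k).im = Real.pi * (2 * k + 1) / (Real.pi + 1) := by
  simp only [ckAux, Complex.add_im, Complex.mul_im, Complex.ofReal_im, Complex.ofReal_re,
    Complex.I_im, Complex.I_re]
  ring

lemma zk_eq_exp_aux (k : ℤ) : zkAux k = Complex.exp (ckAux k) := by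
  rw [zkAux, ckAux, Complex.exp_add]
  congr 1
  · rw [← Complex.ofReal_exp]
    norm_cast
    rw [Real.rpow_def_of_pos (by norm_num : (0:ℝ) < 2), mul_one_div]
  · congr 1
    push_cast
    ring

lemma ck_mul_aux (k : ℤ) :
    ckAux k * ((Real.pi : ℂ) + 1) = (Real.log 2 : ℂ) + (Real.pi : ℂ) * (2 * k + 1) * Complex.I := by
  have h : ((Real.pi : ℂ) + 1) ≠ 0 := pne_aux
  rw [ckAux]
  push_cast
  field_simp

lemma exp_neg_two_aux : Complex.exp ((Real.log 2 : ℂ) + (Real.pi : ℂ) * Complex.I) = -2 := by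
  rw [Complex.exp_add, Complex.exp_pi_mul_I, ← Complex.ofReal_exp,
    Real.exp_log (by norm_num : (0:ℝ) < 2)]
  norm_num

lemma backward_aux (k : ℤ) (h1 : -2 ≤ k) (h2 : k ≤ 1) :
    zkAux k ≠ 0 ∧ zkAux k ^ ((Real.pi : ℂ) + 1) = -2 := by
  have hzk : zkAux k = Complex.exp (ckAux k) := zk_eq_exp_aux k
  refine ⟨hzk ▸ Complex.exp_ne_zero _, ?_⟩
  have hk1 : (-3 : ℝ) ≤ 2 * (k : ℝ) + 1 := by
    have : (-2 : ℝ) ≤ (k : ℝ) := by exact_mod_cast h1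
    linarith
  have hk2 : 2 * (k : ℝ) + 1 ≤ 3 := by
    have : (k : ℝ) ≤ 1 := by exact_mod_cast h2
    linarith
  have hpi3 : (3 : ℝ) < Real.pi := Real.pi_gt_three
  have himl : -Real.pi < (ckAux k).im := by
    rw [ck_im_aux, lt_div_iff₀ ppos_aux]
    nlinarith
  have himu : (ckAux k).im ≤ Real.pi := by
    rw [ck_im_aux, div_le_iff₀ ppos_aux]
    nlinarith
  rw [hzk, Complex.cpow_def_of_ne_zero (Complex.exp_ne_zero _),
    Complex.log_exp himl himu, ck_mul_aux]
  have : (Real.log 2 : ℂ) + (Real.pi : ℂ) * (2 * k + 1) * Complex.I =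
      ((Real.log 2 : ℂ) + (Real.pi : ℂ) * Complex.I) + (k : ℂ) * (2 * (Real.pi : ℂ) * Complex.I) := by
    ring
  rw [this, Complex.exp_add, exp_neg_two_aux, Complex.exp_int_mul_two_pi_mul_I, mul_one]

lemma forward_aux {z : ℂ} (hz : z ≠ 0) (h : z ^ ((Real.pi : ℂ) + 1) = -2) :
    ∃ k : ℤ, -2 ≤ k ∧ k ≤ 1 ∧ zkAux k = z := by
  rw [Complex.cpow_def_of_ne_zero hz, ← exp_neg_two_aux,
    Complex.exp_eq_exp_iff_exists_int] at h
  obtain ⟨n, hn⟩ := h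
  -- imaginary parts
  have him : (Complex.log z).im * (Real.pi + 1) = Real.pi * (2 * n + 1) := by
    have h0 := congrArg Complex.im hn
    simp only [Complex.mul_im, Complex.add_im, Complex.add_re, Complex.mul_re,
      Complex.ofReal_im, Complex.ofReal_re, Complex.I_im, Complex.I_re,
      Complex.intCast_im, Complex.intCast_re, Complex.re_ofNat, Complex.im_ofNat,
      Complex.one_re, Complex.one_im] at h0
    push_cast at h0 ⊢
    linarith
  have hl := Complex.neg_pi_lt_log_im z
  have hu := Complex.log_im_le_pi z
  have hpi3 : (3 : ℝ) < Real.pi := Real.pi_gt_three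
  have hpi4 : Real.pi < 3.15 := Real.pi_lt_d2
  have hb1 : -2 ≤ n := by
    have h1 : -Real.pi * (Real.pi + 1) < Real.pi * (2 * n + 1) := by
      rw [← him]
      exact mul_lt_mul_of_pos_right hl ppos_aux
    have h2 : (-3 : ℝ) < (n : ℝ) := by nlinarith [Real.pi_pos]
    have : (-3 : ℤ) < n := by exact_mod_cast h2
    omega
  have hb2 : n ≤ 1 := by
    have h1 : Real.pi * (2 * n + 1) ≤ Real.pi * (Real.pi + 1) := by
      rw [← him]
      exact mul_le_mul_of_nonneg_right hu (le_of_lt ppos_aux)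
    have h2 : (n : ℝ) < 2 := by nlinarith [Real.pi_pos]
    have : n < 2 := by exact_mod_cast h2
    omega
  refine ⟨n, hb1, hb2, ?_⟩
  have hlog : Complex.log z = ckAux n := by
    have hmul : Complex.log z * ((Real.pi : ℂ) + 1) = ckAux n * ((Real.pi : ℂ) + 1) := by
      rw [ck_mul_aux, hn]; ring
    exact mul_right_cancel₀ pne_aux hmul
  rw [zk_eq_exp_aux, ← hlog, Complex.exp_log hz]

lemma inj_aux : Set.InjOn (fun k : ℤ => zkAux k) {-2, -1, 0, 1} := by
  rintro a ha b hb hab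
  simp only [zk_eq_exp_aux] at hab
  rw [Complex.exp_eq_exp_iff_exists_int] at hab
  obtain ⟨n, hn⟩ := hab
  have him := congrArg Complex.im hn
  simp only [Complex.add_im, Complex.mul_im, Complex.mul_re, Complex.add_re,
    Complex.I_im, Complex.I_re, Complex.intCast_im, Complex.intCast_re,
    Complex.ofReal_im, Complex.ofReal_re, Complex.re_ofNat, Complex.im_ofNat,
    ck_im_aux] at him
  have hpe := ppos_aux
  have hpi3 : (3 : ℝ) < Real.pi := Real.pi_gt_three
  have habs : |(a : ℝ) - b| ≤ 3 := by
    simp only [Set.mem_insert_iff, Set.mem_singleton_iff] at ha hb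
    rcases ha with rfl | rfl | rfl | rfl <;> rcases hb with rfl | rfl | rfl | rfl <;>
      norm_num
  have hpne2 : (2 * Real.pi) ≠ 0 := by positivity
  have key : ((a : ℝ) - b) = n * (Real.pi + 1) := by
    have h2 : Real.pi * (2 * a + 1) = Real.pi * (2 * b + 1) + n * (2 * Real.pi) * (Real.pi + 1) := by
      field_simp at him
      linarith
    have h3 : 2 * Real.pi * ((a : ℝ) - b) = 2 * Real.pi * ((n : ℝ) * (Real.pi + 1)) := by
      linear_combination h2
    exact mul_left_cancel₀ hpne2 h3
  have hn0 : n = 0 := by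
    by_contra hne
    have h1 : (1 : ℝ) ≤ |(n : ℝ)| := by
      have : (1 : ℤ) ≤ |n| := Int.one_le_abs hne
      exact_mod_cast this
    have h2 : Real.pi + 1 ≤ |(n : ℝ) * (Real.pi + 1)| := by
      rw [abs_mul, abs_of_pos ppos_aux]
      nlinarith
    rw [← key] at h2
    linarith
  rw [hn0] at key
  push_cast at key
  have : (a : ℝ) = b := by linarith
  exact_mod_cast this

lemma ncard_set_aux : ({-2, -1, 0, 1} : Set ℤ).ncard = 4 := by
  rw [show ({-2, -1, 0, 1} : Set ℤ) = ↑({-2, -1, 0, 1} : Finset ℤ) by simp]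
  rw [Set.ncard_coe_finset]
  decide

/-- The nonzero complex solutions of the principal-power equation `z ^ (π+1) = -2` are
exactly `2^(1/(π+1)) · exp(iπ(2k+1)/(π+1))` for `k ∈ {-2, -1, 0, 1}`, four values in all. -/
theorem roots_z_pow_pi_add_one_eq_neg_two :
    {z : ℂ | z ≠ 0 ∧ z ^ ((Real.pi : ℂ) + 1) = -2} =
      (fun k : ℤ => (((2 : ℝ) ^ (1 / (Real.pi + 1)) : ℝ) : ℂ) *
        Complex.exp (Complex.I * Real.pi * (2 * k + 1) / ((Real.pi : ℂ) + 1))) ''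
        {-2, -1, 0, 1} ∧
    {z : ℂ | z ≠ 0 ∧ z ^ ((Real.pi : ℂ) + 1) = -2}.ncard = 4 := by
  have hset : {z : ℂ | z ≠ 0 ∧ z ^ ((Real.pi : ℂ) + 1) = -2} =
      (fun k : ℤ => zkAux k) '' {-2, -1, 0, 1} := by
    ext z
    simp only [Set.mem_setOf_eq, Set.mem_image]
    constructor
    · rintro ⟨hz, h⟩
      obtain ⟨k, h1, h2, h3⟩ := forward_aux hz h
      refine ⟨k, ?_, h3⟩
      simp only [Set.mem_insert_iff, Set.mem_singleton_iff]
      omega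
    · rintro ⟨k, hk, rfl⟩
      simp only [Set.mem_insert_iff, Set.mem_singleton_iff] at hk
      exact backward_aux k (by omega) (by omega)
  constructor
  · exact hset
  · rw [hset, Set.ncard_image_of_injOn inj_aux, ncard_set_aux]
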